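/- Let U be a compact metric space and ν a finite signed Borel measure on U with ν(U) = 0. Then sup { ∫ φ dν : φ 1-Lipschitz } ≤ (1 + D_U) ‖ν‖_BL, where D_U = min_{x₀∈U} max_{x₁∈U} d(x₀,x₁). In particular, for probability measures μ₁, μ₂ on U, ‖μ₁ − μ₂‖_BL ≤ W₁(μ₁, μ₂) ≤ (1 + D_U) ‖μ₁ − μ₂‖_BL. -/

import Mathlib

open MeasureTheory

/-- The (least) Lipschitz constant of a real function on a metric space. -/
noncomputable def lipConst {U : Type*} [MetricSpace U] (f : U → ℝ) : ℝ :=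
  sInf {K : ℝ | 0 ≤ K ∧ ∀ u v, |f u - f v| ≤ K * dist u v}

/-- The bounded Lipschitz norm `sup|f| + Lip(f)` of a real function. -/
noncomputable def lipNorm {U : Type*} [MetricSpace U] (f : U → ℝ) : ℝ :=
  (⨆ u, |f u|) + lipConst f

/-- The dual bounded Lipschitz (BL) norm of a functional `I`. -/
noncomputable def blNormOf {U : Type*} [MetricSpace U] (I : (U → ℝ) → ℝ) : ℝ :=
  sSup {r : ℝ | ∃ φ : U → ℝ, (∃ K, LipschitzWith K φ) ∧ lipNorm φ ≤ 1 ∧ r = I φ}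

/-- Integration of a test function against a finite signed measure, via its
Jordan decomposition. -/
noncomputable def pairSM {α : Type*} [MeasurableSpace α]
    (ν : SignedMeasure α) (φ : α → ℝ) : ℝ :=
  ∫ u, φ u ∂ν.toJordanDecomposition.posPart -
    ∫ u, φ u ∂ν.toJordanDecomposition.negPart

/-- `D_U = min_{x₀} max_{x₁} d(x₀,x₁)`. -/
noncomputable def DU (U : Type*) [MetricSpace U] : ℝ :=
  ⨅ x₀ : U, ⨆ x₁ : U, dist x₀ x₁

section Aux

variable {U : Type*} [MetricSpace U] [CompactSpace U] [Nonempty U]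

lemma exists_dist_bound (U : Type*) [MetricSpace U] [CompactSpace U] [Nonempty U] :
    ∃ C : ℝ, 0 ≤ C ∧ ∀ x y : U, dist x y ≤ C := by
  obtain ⟨C, hC⟩ := Metric.isBounded_iff.mp (isCompact_univ (X := U)).isBounded
  refine ⟨C, ?_, fun x y => hC (Set.mem_univ x) (Set.mem_univ y)⟩
  inhabit U
  exact le_trans dist_nonneg (hC (Set.mem_univ default) (Set.mem_univ default))

lemma lipConst_le {f : U → ℝ} {K : ℝ} (hK : 0 ≤ K)
    (h : ∀ u v, |f u - f v| ≤ K * dist u v) : lipConst f ≤ K :=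
  csInf_le ⟨0, fun _ hx => hx.1⟩ ⟨hK, h⟩

lemma lipConst_nonneg (f : U → ℝ) : 0 ≤ lipConst f :=
  Real.sInf_nonneg fun _ hx => hx.1

lemma lip_set_nonempty {f : U → ℝ} (h : ∃ K, LipschitzWith K f) :
    {K : ℝ | 0 ≤ K ∧ ∀ u v, |f u - f v| ≤ K * dist u v}.Nonempty := by
  obtain ⟨K, hK⟩ := h
  refine ⟨K, K.coe_nonneg, fun u v => ?_⟩
  have := hK.dist_le_mul u v
  rwa [Real.dist_eq] at this

lemma abs_sub_le_lipConst_mul {f : U → ℝ} (h : ∃ K, LipschitzWith K f) (u v : U) :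
    |f u - f v| ≤ lipConst f * dist u v := by
  rcases eq_or_ne u v with rfl | huv
  · simp
  have hd : 0 < dist u v := dist_pos.mpr huv
  refine le_of_forall_pos_le_add fun δ hδ => ?_
  obtain ⟨K, hKmem, hKlt⟩ :=
    Real.lt_sInf_add_pos (lip_set_nonempty h) (show 0 < δ / dist u v by positivity)
  calc |f u - f v| ≤ K * dist u v := hKmem.2 u v
    _ ≤ (lipConst f + δ / dist u v) * dist u v :=
        mul_le_mul_of_nonneg_right hKlt.le dist_nonneg
    _ = lipConst f * dist u v + δ := by field_simp

lemma le_iSup_abs {f : U → ℝ} (h : ∃ K, LipschitzWith K f) (u : U) :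
    |f u| ≤ ⨆ v, |f v| := by
  obtain ⟨C, hC0, hC⟩ := exists_dist_bound U
  refine le_ciSup (f := fun v => |f v|) ⟨|f u| + lipConst f * C, ?_⟩ u
  rintro _ ⟨v, rfl⟩
  have h1 := abs_sub_le_lipConst_mul h v u
  have h2 : |f v| ≤ |f u| + |f v - f u| := by
    calc |f v| = |f u + (f v - f u)| := by ring_nf
      _ ≤ |f u| + |f v - f u| := abs_add_le _ _
  have hcl : 0 ≤ lipConst f := lipConst_nonneg f
  nlinarith [hC v u, dist_nonneg (x := v) (y := u)]

lemma lipschitzWith_one_of {f : U → ℝ} (hK : ∃ K, LipschitzWith K f)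
    (h1 : lipNorm f ≤ 1) : LipschitzWith 1 f := by
  have h0 : 0 ≤ ⨆ u, |f u| := Real.iSup_nonneg fun u => abs_nonneg _
  have hl : lipConst f ≤ 1 := by unfold lipNorm at h1; linarith
  refine LipschitzWith.of_dist_le_mul fun u v => ?_
  rw [Real.dist_eq]
  calc |f u - f v| ≤ lipConst f * dist u v := abs_sub_le_lipConst_mul hK u v
    _ ≤ 1 * dist u v := mul_le_mul_of_nonneg_right hl dist_nonneg
    _ = (1 : NNReal) * dist u v := by norm_num

lemma DU_nonneg : 0 ≤ DU U := by
  obtain ⟨C, hC0, hC⟩ := exists_dist_bound U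
  refine le_ciInf fun x₀ => ?_
  have : dist x₀ x₀ ≤ ⨆ x₁, dist x₀ x₁ :=
    le_ciSup (f := fun x₁ => dist x₀ x₁) ⟨C, by rintro _ ⟨x₁, rfl⟩; exact hC _ _⟩ x₀
  simpa using this

lemma exists_center {ε : ℝ} (hε : 0 < ε) :
    ∃ x₀ : U, ∀ u : U, dist x₀ u ≤ DU U + ε := by
  obtain ⟨C, hC0, hC⟩ := exists_dist_bound U
  have hlt : DU U < DU U + ε := lt_add_of_pos_right _ hε
  obtain ⟨x₀, hx₀⟩ := exists_lt_of_ciInf_lt hlt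
  refine ⟨x₀, fun u => ?_⟩
  have : dist x₀ u ≤ ⨆ x₁, dist x₀ x₁ :=
    le_ciSup (f := fun x₁ => dist x₀ x₁) ⟨C, by rintro _ ⟨x₁, rfl⟩; exact hC _ _⟩ u
  exact this.trans hx₀.le

lemma zero_mem_blSet (I : (U → ℝ) → ℝ) (hI0 : I (fun _ => (0 : ℝ)) = 0) :
    (0 : ℝ) ∈ {r : ℝ | ∃ φ : U → ℝ, (∃ K, LipschitzWith K φ) ∧ lipNorm φ ≤ 1 ∧ r = I φ} := by
  refine ⟨fun _ => 0, ⟨1, LipschitzWith.of_dist_le_mul fun u v => by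
    simpa using dist_nonneg (x := u) (y := v)⟩, ?_, hI0.symm⟩
  have h1 : (⨆ _ : U, |(0 : ℝ)|) = 0 := by simp
  have h2 : lipConst (fun _ : U => (0 : ℝ)) ≤ 0 :=
    lipConst_le le_rfl (by intro u v; simpa using mul_nonneg le_rfl dist_nonneg)
  unfold lipNorm
  rw [h1]
  linarith

lemma blSet_bddAbove (I : (U → ℝ) → ℝ) (M : ℝ)
    (hM : ∀ φ : U → ℝ, (∃ K, LipschitzWith K φ) → (∀ u, |φ u| ≤ 1) → I φ ≤ M) :
    BddAbove {r : ℝ | ∃ φ : U → ℝ, (∃ K, LipschitzWith K φ) ∧ lipNorm φ ≤ 1 ∧ r = I φ} := by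
  refine ⟨M, ?_⟩
  rintro r ⟨φ, hK, hn, rfl⟩
  refine hM φ hK fun u => ?_
  have h0 : 0 ≤ lipConst φ := lipConst_nonneg φ
  have h1 := le_iSup_abs hK u
  unfold lipNorm at hn
  linarith

lemma key (I : (U → ℝ) → ℝ)
    (hdiv : ∀ (φ : U → ℝ) (c : ℝ), I (fun u => φ u / c) = I φ / c)
    (hconst : ∀ φ : U → ℝ, LipschitzWith 1 φ → ∀ c : ℝ, I (fun u => φ u - c) = I φ)
    (hbdd : BddAbove {r : ℝ | ∃ φ : U → ℝ, (∃ K, LipschitzWith K φ) ∧ lipNorm φ ≤ 1 ∧ r = I φ}) :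
    sSup {r : ℝ | ∃ φ : U → ℝ, LipschitzWith 1 φ ∧ r = I φ} ≤ (1 + DU U) * blNormOf I := by
  have hD : 0 ≤ DU U := DU_nonneg
  have hI0 : I (fun _ => 0) = 0 := by
    have h := hdiv (fun _ => 0) 2
    simp only [zero_div] at h
    linarith
  have hB0 : 0 ≤ blNormOf I := le_csSup hbdd (zero_mem_blSet I hI0)
  refine Real.sSup_le ?_ (mul_nonneg (by linarith) hB0)
  rintro r ⟨φ, hφ, rfl⟩
  have hφd : ∀ u v : U, |φ u - φ v| ≤ dist u v := fun u v => by
    have := hφ.dist_le_mul u v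
    rw [Real.dist_eq] at this
    simpa using this
  have hstep : ∀ ε : ℝ, 0 < ε → I φ ≤ (1 + DU U + ε) * blNormOf I := by
    intro ε hε
    obtain ⟨x₀, hx₀⟩ := exists_center (U := U) hε
    set c : ℝ := 1 + DU U + ε with hc
    have hcpos : 0 < c := by simp only [hc]; linarith
    have hc1 : 1 ≤ c := by simp only [hc]; linarith
    set ψ : U → ℝ := fun u => (φ u - φ x₀) / c with hψdef
    have hψsub : ∀ u v : U, |ψ u - ψ v| = |φ u - φ v| / c := by
      intro u v
      have h : ψ u - ψ v = (φ u - φ v) / c := by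
        simp only [hψdef]; ring
      rw [h, abs_div, abs_of_pos hcpos]
    have hψlip : ∀ u v : U, |ψ u - ψ v| ≤ (1 / c) * dist u v := by
      intro u v
      rw [hψsub u v]
      calc |φ u - φ v| / c ≤ dist u v / c :=
            div_le_div_of_nonneg_right (hφd u v) hcpos.le
          _ = (1 / c) * dist u v := by ring
    have hψb : ∀ u : U, |ψ u| ≤ (DU U + ε) / c := by
      intro u
      have h1 : |φ u - φ x₀| ≤ DU U + ε := by
        refine (hφd u x₀).trans ?_
        rw [dist_comm]
        exact hx₀ u
      have : |ψ u| = |φ u - φ x₀| / c := by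
        simp only [hψdef, abs_div, abs_of_pos hcpos]
      rw [this]
      exact div_le_div_of_nonneg_right h1 hcpos.le
    have hmem : I ψ ∈
        {r : ℝ | ∃ φ : U → ℝ, (∃ K, LipschitzWith K φ) ∧ lipNorm φ ≤ 1 ∧ r = I φ} := by
      refine ⟨ψ, ⟨1, LipschitzWith.of_dist_le_mul fun u v => ?_⟩, ?_, rfl⟩
      · rw [Real.dist_eq]
        calc |ψ u - ψ v| ≤ (1 / c) * dist u v := hψlip u v
          _ ≤ 1 * dist u v := by
              apply mul_le_mul_of_nonneg_right _ dist_nonneg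
              rw [div_le_one hcpos]; exact hc1
          _ = (1 : NNReal) * dist u v := by norm_num
      · have hsup : (⨆ u, |ψ u|) ≤ (DU U + ε) / c := ciSup_le hψb
        have hlc : lipConst ψ ≤ 1 / c :=
          lipConst_le (by positivity) hψlip
        unfold lipNorm
        have : (DU U + ε) / c + 1 / c = 1 := by
          field_simp [hc]; ring
        linarith
    have hle : I ψ ≤ blNormOf I := le_csSup hbdd hmem
    have hIψ : I ψ = I φ / c := by
      have h1 : I ψ = I (fun u => φ u - φ x₀) / c := hdiv _ c
      rw [h1, hconst φ hφ]
    rw [hIψ] at hle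
    calc I φ = (I φ / c) * c := by field_simp
      _ ≤ blNormOf I * c := mul_le_mul_of_nonneg_right hle hcpos.le
      _ = c * blNormOf I := mul_comm _ _
  rcases hB0.lt_or_eq with hB | hB
  · refine le_of_forall_pos_le_add fun δ hδ => ?_
    have h := hstep (δ / blNormOf I) (by positivity)
    calc I φ ≤ (1 + DU U + δ / blNormOf I) * blNormOf I := h
      _ = (1 + DU U) * blNormOf I + δ := by field_simp
  · have h := hstep 1 one_pos
    rw [← hB] at h ⊢
    simpa using h

end Aux

theorem stmt2 {U : Type*} [MetricSpace U] [CompactSpace U] [Nonempty U]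
    [MeasurableSpace U] [BorelSpace U]
    (ν : SignedMeasure U) (hν : ν Set.univ = 0) :
    (sSup {r : ℝ | ∃ φ : U → ℝ, LipschitzWith 1 φ ∧ r = pairSM ν φ} ≤
        (1 + DU U) * blNormOf (pairSM ν)) ∧
    (∀ μ₁ μ₂ : Measure U, IsProbabilityMeasure μ₁ → IsProbabilityMeasure μ₂ →
      blNormOf (fun φ => ∫ u, φ u ∂μ₁ - ∫ u, φ u ∂μ₂) ≤
          sSup {r : ℝ | ∃ φ : U → ℝ, LipschitzWith 1 φ ∧
            r = ∫ u, φ u ∂μ₁ - ∫ u, φ u ∂μ₂} ∧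
        sSup {r : ℝ | ∃ φ : U → ℝ, LipschitzWith 1 φ ∧
            r = ∫ u, φ u ∂μ₁ - ∫ u, φ u ∂μ₂} ≤
          (1 + DU U) * blNormOf (fun φ => ∫ u, φ u ∂μ₁ - ∫ u, φ u ∂μ₂)) := by
  constructor
  · -- part 1
    set pos := ν.toJordanDecomposition.posPart with hpos
    set neg := ν.toJordanDecomposition.negPart with hneg
    have hzero : (pos Set.univ).toReal - (neg Set.univ).toReal = 0 := by
      have h := ν.toSignedMeasure_toJordanDecomposition
      have h2 : ν Set.univ = (pos Set.univ).toReal - (neg Set.univ).toReal := by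
        conv_lhs => rw [← h]
        rw [MeasureTheory.JordanDecomposition.toSignedMeasure,
          MeasureTheory.Measure.toSignedMeasure_sub_apply MeasurableSet.univ]
        rfl
      rw [← h2, hν]
    apply key
    · intro φ c
      unfold pairSM
      rw [integral_div, integral_div]
      ring
    · intro φ hφ c
      have hint1 : Integrable φ pos :=
        hφ.continuous.integrable_of_hasCompactSupport (HasCompactSupport.of_compactSpace φ)
      have hint2 : Integrable φ neg :=
        hφ.continuous.integrable_of_hasCompactSupport (HasCompactSupport.of_compactSpace φ)
      unfold pairSM
      rw [integral_sub hint1 (integrable_const c), integral_sub hint2 (integrable_const c),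
        integral_const, integral_const, smul_eq_mul, smul_eq_mul]
      have : (pos Set.univ).toReal * c - (neg Set.univ).toReal * c = 0 := by
        rw [← sub_mul, hzero, zero_mul]
      have h' : pos.real Set.univ * c - neg.real Set.univ * c = 0 := this
      linarith
    · apply blSet_bddAbove _ ((pos Set.univ).toReal + (neg Set.univ).toReal)
      intro φ hK hb
      have h1 : ‖∫ u, φ u ∂pos‖ ≤ 1 * (pos Set.univ).toReal :=
        norm_integral_le_of_norm_le_const (Filter.Eventually.of_forall fun u => by
          simpa using hb u)
      have h2 : ‖∫ u, φ u ∂neg‖ ≤ 1 * (neg Set.univ).toReal :=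
        norm_integral_le_of_norm_le_const (Filter.Eventually.of_forall fun u => by
          simpa using hb u)
      rw [Real.norm_eq_abs] at h1 h2
      unfold pairSM
      have := abs_le.mp h1
      have := abs_le.mp h2
      cases abs_le.mp h1 with
      | intro a b => cases abs_le.mp h2 with
        | intro a2 b2 => linarith
  · intro μ₁ μ₂ h₁ h₂
    have hbdd : BddAbove {r : ℝ | ∃ φ : U → ℝ, (∃ K, LipschitzWith K φ) ∧ lipNorm φ ≤ 1 ∧
        r = ∫ u, φ u ∂μ₁ - ∫ u, φ u ∂μ₂} := by
      apply blSet_bddAbove _ 2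
      intro φ hK hb
      have h1 : ‖∫ u, φ u ∂μ₁‖ ≤ 1 * (μ₁ Set.univ).toReal :=
        norm_integral_le_of_norm_le_const (Filter.Eventually.of_forall fun u => by
          simpa using hb u)
      have h2 : ‖∫ u, φ u ∂μ₂‖ ≤ 1 * (μ₂ Set.univ).toReal :=
        norm_integral_le_of_norm_le_const (Filter.Eventually.of_forall fun u => by
          simpa using hb u)
      rw [Real.norm_eq_abs] at h1 h2
      simp only [measure_univ, ENNReal.toReal_one, one_mul] at h1 h2
      cases abs_le.mp h1 with
      | intro a b => cases abs_le.mp h2 with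
        | intro a2 b2 => linarith
    have hconst : ∀ φ : U → ℝ, LipschitzWith 1 φ → ∀ c : ℝ,
        (∫ u, φ u - c ∂μ₁) - (∫ u, φ u - c ∂μ₂) = (∫ u, φ u ∂μ₁) - ∫ u, φ u ∂μ₂ := by
      intro φ hφ c
      have hint1 : Integrable φ μ₁ :=
        hφ.continuous.integrable_of_hasCompactSupport (HasCompactSupport.of_compactSpace φ)
      have hint2 : Integrable φ μ₂ :=
        hφ.continuous.integrable_of_hasCompactSupport (HasCompactSupport.of_compactSpace φ)
      rw [integral_sub hint1 (integrable_const c), integral_sub hint2 (integrable_const c),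
        integral_const, integral_const]
      simp [measure_univ]
    constructor
    · -- BL norm ≤ W1
      obtain ⟨C, hC0, hC⟩ := exists_dist_bound U
      have hW1bdd : BddAbove {r : ℝ | ∃ φ : U → ℝ, LipschitzWith 1 φ ∧
          r = ∫ u, φ u ∂μ₁ - ∫ u, φ u ∂μ₂} := by
        inhabit U
        refine ⟨2 * C, ?_⟩
        rintro r ⟨φ, hφ, rfl⟩
        have hshift : (∫ u, φ u ∂μ₁) - ∫ u, φ u ∂μ₂ =
            (∫ u, φ u - φ default ∂μ₁) - ∫ u, φ u - φ default ∂μ₂ :=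
          (hconst φ hφ (φ default)).symm
        have habs : ∀ u : U, |φ u - φ default| ≤ C := by
          intro u
          have := hφ.dist_le_mul u default
          rw [Real.dist_eq] at this
          refine le_trans (by simpa using this) (hC u default)
        have h1 : ‖∫ u, φ u - φ default ∂μ₁‖ ≤ C * (μ₁ Set.univ).toReal :=
          norm_integral_le_of_norm_le_const (Filter.Eventually.of_forall fun u => by
            simpa using habs u)
        have h2 : ‖∫ u, φ u - φ default ∂μ₂‖ ≤ C * (μ₂ Set.univ).toReal :=
          norm_integral_le_of_norm_le_const (Filter.Eventually.of_forall fun u => by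
            simpa using habs u)
        rw [Real.norm_eq_abs] at h1 h2
        simp only [measure_univ, ENNReal.toReal_one, mul_one] at h1 h2
        rw [hshift]
        cases abs_le.mp h1 with
        | intro a b => cases abs_le.mp h2 with
          | intro a2 b2 => linarith
      have h0mem : (0 : ℝ) ∈ {r : ℝ | ∃ φ : U → ℝ, LipschitzWith 1 φ ∧
          r = ∫ u, φ u ∂μ₁ - ∫ u, φ u ∂μ₂} := by
        refine ⟨fun _ => 0, LipschitzWith.of_dist_le_mul fun u v => by
          simpa using mul_nonneg (by norm_num : (0:ℝ) ≤ (1:NNReal)) dist_nonneg, by simp⟩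
      refine Real.sSup_le ?_ (le_csSup hW1bdd h0mem)
      rintro r ⟨φ, hK, hn, rfl⟩
      exact le_csSup hW1bdd ⟨φ, lipschitzWith_one_of hK hn, rfl⟩
    · -- W1 ≤ (1+DU) BL
      apply key
      · intro φ c
        simp only [integral_div]
        ring
      · intro φ hφ c
        exact hconst φ hφ c
      · exact hbdd
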